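/- For integer λ ≥ 0, S_{1,2}(λ) := ∫_{[0,1]³} (y₁+y₂)^{2λ}(y₁+y₃)^{2λ}|y₂−y₃|^{2λ} dy equals (−1)^λ ∑_{I₁₂,I₁₃,I₂₃=−λ}^{λ} (−1)^{I₂₃} C(2λ, λ+I₁₂) C(2λ, λ+I₁₃) C(2λ, λ+I₂₃) · [1/((1+2λ+I₁₂+I₁₃)(1+2λ−I₁₂+I₂₃)(1+2λ−I₁₃−I₂₃))]. -/

import Mathlib

open MeasureTheory Finset

lemma int_pow01 (n : ℕ) : ∫ x in Set.Icc (0:ℝ) 1, x ^ n = 1 / (n + 1) := by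
  rw [MeasureTheory.integral_Icc_eq_integral_Ioc,
    ← intervalIntegral.integral_of_le (zero_le_one), integral_pow]
  simp

lemma mono_int (m n p : ℕ) :
    ∫ y in (Set.Icc (0:ℝ) 1) ×ˢ ((Set.Icc (0:ℝ) 1) ×ˢ (Set.Icc (0:ℝ) 1)),
      y.1 ^ m * (y.2.1 ^ n * y.2.2 ^ p)
    = (1/(m+1)) * ((1/(n+1)) * (1/(p+1))) := by
  rw [MeasureTheory.Measure.volume_eq_prod,
    setIntegral_prod_mul (f := fun x : ℝ => x ^ m)
      (g := fun z : ℝ × ℝ => z.1 ^ n * z.2 ^ p)]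
  rw [MeasureTheory.Measure.volume_eq_prod,
    setIntegral_prod_mul (f := fun x : ℝ => x ^ n) (g := fun x : ℝ => x ^ p)]
  rw [int_pow01, int_pow01, int_pow01]

lemma trip {s : Finset ℕ} (f g h : ℕ → ℝ) :
    (∑ a ∈ s, f a) * (∑ b ∈ s, g b) * (∑ c ∈ s, h c)
      = ∑ a ∈ s, ∑ b ∈ s, ∑ c ∈ s, f a * g b * h c := by
  rw [Finset.sum_mul_sum, Finset.sum_mul]
  refine Finset.sum_congr rfl fun a _ => ?_
  rw [Finset.sum_mul]
  exact Finset.sum_congr rfl fun b _ => Finset.mul_sum _ _ _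

lemma expand_key (lam : ℕ) (y : ℝ × ℝ × ℝ) :
    (y.1 + y.2.1) ^ (2 * lam) * (y.1 + y.2.2) ^ (2 * lam) *
      |y.2.1 - y.2.2| ^ (2 * lam)
    = ∑ a ∈ range (2*lam+1), ∑ b ∈ range (2*lam+1), ∑ c ∈ range (2*lam+1),
        (((2*lam).choose a : ℝ) * ((2*lam).choose b) * ((2*lam).choose c)
          * (-1)^(2*lam - c)) *
          (y.1 ^ (a+b) * (y.2.1 ^ ((2*lam - a) + c) * y.2.2 ^ ((2*lam - b) + (2*lam - c)))) := by
  have habs : |y.2.1 - y.2.2| ^ (2*lam) = (y.2.1 - y.2.2)^(2*lam) := by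
    rw [pow_mul, pow_mul, sq_abs]
  rw [habs, sub_eq_add_neg, add_pow, add_pow, add_pow, trip]
  refine Finset.sum_congr rfl fun a _ => Finset.sum_congr rfl fun b _ =>
    Finset.sum_congr rfl fun c _ => ?_
  rw [neg_pow]
  ring

lemma sum_shift (lam : ℕ) (f : ℤ → ℝ) :
    ∑ i ∈ Finset.Icc (-(lam:ℤ)) (lam:ℤ), f i
      = ∑ a ∈ range (2*lam+1), f ((a:ℤ) - lam) := by
  refine Finset.sum_nbij' (fun i => (i + lam).toNat) (fun a => (a:ℤ) - lam) ?_ ?_ ?_ ?_ ?_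
  · intro i hi; simp only [Finset.mem_Icc] at hi; simp only [Finset.mem_range]; omega
  · intro a ha; simp only [Finset.mem_range] at ha; simp only [Finset.mem_Icc]; omega
  · intro i hi; simp only [Finset.mem_Icc] at hi; omega
  · intro a ha; simp only [Finset.mem_range] at ha; omega
  · intro i hi; simp only [Finset.mem_Icc] at hi
    congr 1; omega

lemma neg_one_pow_sub' (lam c : ℕ) (h : c ≤ 2*lam) :
    ((-1:ℝ))^(2*lam - c) = (-1)^c := by
  have h2 : (2*lam - c) + c = 2*lam := by omega
  have h1 : ((-1:ℝ))^(2*lam-c) * (-1)^c = 1 := by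
    rw [← pow_add, h2, pow_mul]; norm_num
  have hc : ((-1:ℝ))^c * (-1)^c = 1 := by
    rw [← pow_add, ← two_mul, pow_mul]; norm_num
  have hne : ((-1:ℝ))^c ≠ 0 := pow_ne_zero _ (by norm_num)
  exact mul_right_cancel₀ hne (h1.trans hc.symm)

lemma zl2 (lam c : ℕ) :
    ((-1:ℝ))^((c:ℤ) - (lam:ℤ)) = (-1:ℝ)^c * (-1:ℝ)^lam := by
  rw [zpow_sub₀ (by norm_num : (-1:ℝ) ≠ 0), zpow_natCast, zpow_natCast, div_eq_mul_inv,
    ← inv_pow]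
  norm_num

theorem stmt12 (lam : ℕ) :
    ∫ y in (Set.Icc (0 : ℝ) 1) ×ˢ ((Set.Icc (0 : ℝ) 1) ×ˢ (Set.Icc (0 : ℝ) 1)),
        (y.1 + y.2.1) ^ (2 * lam) * (y.1 + y.2.2) ^ (2 * lam) *
          |y.2.1 - y.2.2| ^ (2 * lam)
      = (-1 : ℝ) ^ lam *
        ∑ I12 ∈ Finset.Icc (-(lam : ℤ)) lam,
          ∑ I13 ∈ Finset.Icc (-(lam : ℤ)) lam,
            ∑ I23 ∈ Finset.Icc (-(lam : ℤ)) lam,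
              (-1 : ℝ) ^ I23 *
                ((2 * lam).choose ((lam : ℤ) + I12).toNat : ℝ) *
                ((2 * lam).choose ((lam : ℤ) + I13).toNat : ℝ) *
                ((2 * lam).choose ((lam : ℤ) + I23).toNat : ℝ) *
                (1 / ((1 + 2 * (lam : ℝ) + (I12 : ℝ) + (I13 : ℝ)) *
                  (1 + 2 * (lam : ℝ) - (I12 : ℝ) + (I23 : ℝ)) *
                  (1 + 2 * (lam : ℝ) - (I13 : ℝ) - (I23 : ℝ)))) := by
  set S := (Set.Icc (0 : ℝ) 1) ×ˢ ((Set.Icc (0 : ℝ) 1) ×ˢ (Set.Icc (0 : ℝ) 1)) with hS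
  have hcs : IsCompact S := (isCompact_Icc).prod ((isCompact_Icc).prod isCompact_Icc)
  set T : ℕ → ℕ → ℕ → ℝ := fun a b c =>
    (((2*lam).choose a : ℝ) * ((2*lam).choose b) * ((2*lam).choose c) * (-1)^(2*lam - c)) *
      ((1/((a+b : ℕ)+1)) * ((1/(((2*lam - a) + c : ℕ)+1)) * (1/(((2*lam - b) + (2*lam - c) : ℕ)+1))))
    with hT
  have hintm : ∀ (cf:ℝ) (m n p : ℕ),
      IntegrableOn (fun y : ℝ×ℝ×ℝ => cf * (y.1 ^ m * (y.2.1 ^ n * y.2.2 ^ p))) S := by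
    intro cf m n p
    exact ((by fun_prop : Continuous fun y : ℝ×ℝ×ℝ =>
      cf * (y.1 ^ m * (y.2.1 ^ n * y.2.2 ^ p))).continuousOn).integrableOn_compact hcs
  have L : (∫ y in S,
        (y.1 + y.2.1) ^ (2 * lam) * (y.1 + y.2.2) ^ (2 * lam) *
          |y.2.1 - y.2.2| ^ (2 * lam))
      = ∑ a ∈ range (2*lam+1), ∑ b ∈ range (2*lam+1), ∑ c ∈ range (2*lam+1), T a b c := by
    simp only [expand_key lam]
    rw [MeasureTheory.integral_finset_sum _ (fun a _ =>
      MeasureTheory.integrable_finset_sum _ (fun b _ =>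
        MeasureTheory.integrable_finset_sum _ (fun c _ => hintm _ _ _ _)))]
    refine Finset.sum_congr rfl fun a _ => ?_
    rw [MeasureTheory.integral_finset_sum _ (fun b _ =>
      MeasureTheory.integrable_finset_sum _ (fun c _ => hintm _ _ _ _))]
    refine Finset.sum_congr rfl fun b _ => ?_
    rw [MeasureTheory.integral_finset_sum _ (fun c _ => hintm _ _ _ _)]
    refine Finset.sum_congr rfl fun c _ => ?_
    rw [MeasureTheory.integral_const_mul, hS, mono_int]
  rw [L]
  simp only [sum_shift, Finset.mul_sum]
  refine Finset.sum_congr rfl fun a ha => ?_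
  refine Finset.sum_congr rfl fun b hb => ?_
  refine Finset.sum_congr rfl fun c hc => ?_
  simp only [Finset.mem_range] at ha hb hc
  have hta : ((lam:ℤ) + ((a:ℤ) - lam)).toNat = a := by omega
  have htb : ((lam:ℤ) + ((b:ℤ) - lam)).toNat = b := by omega
  have htc : ((lam:ℤ) + ((c:ℤ) - lam)).toNat = c := by omega
  simp only [hta, htb, htc, hT]
  rw [zl2 lam c, neg_one_pow_sub' lam c (by omega)]
  have cast0 : (((a+b : ℕ) : ℝ) + 1) = 1 + 2*(lam:ℝ) + (((a:ℤ) - lam : ℤ):ℝ) + (((b:ℤ) - lam : ℤ):ℝ) := by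
    push_cast; ring
  have cast1 : ((((2*lam - a) + c : ℕ) : ℝ) + 1) = 1 + 2*(lam:ℝ) - (((a:ℤ) - lam : ℤ):ℝ) + (((c:ℤ) - lam : ℤ):ℝ) := by
    push_cast [Nat.cast_sub (by omega : a ≤ 2*lam)]; ring
  have cast2 : ((((2*lam - b) + (2*lam - c) : ℕ) : ℝ) + 1) = 1 + 2*(lam:ℝ) - (((b:ℤ) - lam : ℤ):ℝ) - (((c:ℤ) - lam : ℤ):ℝ) := by
    push_cast [Nat.cast_sub (by omega : b ≤ 2*lam), Nat.cast_sub (by omega : c ≤ 2*lam)]; ring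
  rw [cast0, cast1, cast2]
  have hll : ((-1:ℝ))^lam * ((-1:ℝ))^lam = 1 := by
    rw [← pow_add, ← two_mul, pow_mul]; norm_num
  simp only [one_div, mul_inv]
  push_cast
  linear_combination (-( ((-1:ℝ)^c) * (((2*lam).choose a : ℝ) * ((2*lam).choose b) * ((2*lam).choose c)) *
    ((1 + 2*(lam:ℝ) + ((a:ℝ) - lam) + ((b:ℝ) - lam))⁻¹ *
      (1 + 2*(lam:ℝ) - ((a:ℝ) - lam) + ((c:ℝ) - lam))⁻¹ *
      (1 + 2*(lam:ℝ) - ((b:ℝ) - lam) - ((c:ℝ) - lam))⁻¹))) * hll
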